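/- Let N = ℤ⁴ + ℤ·g₁ ⊆ ℚ⁴ where g₁ = (1/21)(1,1,7,12), and let S be the set of eleven vectors {e₁, e₂, e₃, e₄, (1/21)(1,1,7,12), (1/21)(2,2,14,3), (1/21)(3,3,0,15), (1/21)(4,4,7,6), (1/21)(6,6,0,9), (1/21)(7,7,7,0), (1/21)(9,9,0,3)}, where e₁,…,e₄ are the standard basis vectors. Then S is a minimal generating set: no element of S is a linear combination with nonnegative integer coefficients of the other ten elements of S. -/

import Mathlib

/-- The lattice `N = ℤ⁴ + ℤ·g₁ ⊆ ℚ⁴` with `g₁ = (1/21)(1,1,7,12)`, the subgroup of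
`ℚ⁴` generated by the standard basis vectors and `g₁`. -/
def N21 : Submodule ℤ (Fin 4 → ℚ) :=
  Submodule.span ℤ
    (insert (![1/21, 1/21, 7/21, 12/21] : Fin 4 → ℚ)
      (Set.range fun i : Fin 4 => (Pi.single i 1 : Fin 4 → ℚ)))

/-- The eleven age-1 elements of the cone for the singularity `(1/21)(1,1,7,12)`. -/
def S21 : Fin 11 → (Fin 4 → ℚ) :=
  ![(Pi.single 0 1 : Fin 4 → ℚ), Pi.single 1 1, Pi.single 2 1, Pi.single 3 1,
    ![1/21, 1/21, 7/21, 12/21], ![2/21, 2/21, 14/21, 3/21], ![3/21, 3/21, 0, 15/21],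
    ![4/21, 4/21, 7/21, 6/21], ![6/21, 6/21, 0, 9/21], ![7/21, 7/21, 7/21, 0],
    ![9/21, 9/21, 0, 3/21]]

set_option maxHeartbeats 1000000 in
/-- Every element of `S21` has age (coordinate sum) equal to `1`. -/
lemma S21_age (i : Fin 11) : S21 i 0 + S21 i 1 + S21 i 2 + S21 i 3 = 1 := by
  obtain ⟨m, hm⟩ := i
  interval_cases m <;>
    norm_num [S21, Matrix.cons_val_succ', Matrix.cons_val_zero'] <;>
    simp (config := { decide := true }) [Pi.single_apply] <;>
    norm_num

set_option maxHeartbeats 4000000 in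
/-- The eleven vectors of `S21` are pairwise distinct. -/
lemma S21_inj : Function.Injective S21 := by
  have p00 : (Pi.single 0 1 : Fin 4 → ℚ) 0 = 1 := by simp
  have p01 : (Pi.single 0 1 : Fin 4 → ℚ) 1 = 0 := by simp
  have p03 : (Pi.single 0 1 : Fin 4 → ℚ) 3 = 0 := by simp
  have p10 : (Pi.single 1 1 : Fin 4 → ℚ) 0 = 0 := by simp
  have p11 : (Pi.single 1 1 : Fin 4 → ℚ) 1 = 1 := by simp
  have p13 : (Pi.single 1 1 : Fin 4 → ℚ) 3 = 0 := by simp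
  have p20 : (Pi.single 2 1 : Fin 4 → ℚ) 0 = 0 := by simp
  have p21 : (Pi.single 2 1 : Fin 4 → ℚ) 1 = 0 := by simp
  have p23 : (Pi.single 2 1 : Fin 4 → ℚ) 3 = 0 := by simp
  have p30 : (Pi.single 3 1 : Fin 4 → ℚ) 0 = 0 := by simp
  have p31 : (Pi.single 3 1 : Fin 4 → ℚ) 1 = 0 := by simp
  have p33 : (Pi.single 3 1 : Fin 4 → ℚ) 3 = 1 := by simp
  intro i k h
  have h0 := congrFun h 0
  have h1 := congrFun h 1
  have h3 := congrFun h 3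
  clear h
  obtain ⟨m, hm⟩ := i
  obtain ⟨n, hn⟩ := k
  interval_cases m <;> interval_cases n <;>
    first
      | rfl
      | (revert h0 h1 h3; norm_num [S21, Matrix.cons_val_succ', Matrix.cons_val_zero',
          p00, p01, p03, p10, p11, p13, p20, p21, p23, p30, p31, p33])

/-- the set `S` of eleven age-1 elements is a minimal generating set:
no element of `S` is an `ℕ`-linear combination of the other ten. -/
theorem age_one_elements_minimal :
    ∀ j : Fin 11, ¬ ∃ c : Fin 11 → ℕ, c j = 0 ∧ S21 j = ∑ i, (c i : ℚ) • S21 i := by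
  rintro j ⟨c, hcj, hsum⟩
  have hk : ∀ k : Fin 4, S21 j k = ∑ i, (c i : ℚ) * S21 i k := by
    intro k
    have := congrFun hsum k
    simpa [Finset.sum_apply] using this
  have hages : (∑ i, (c i : ℚ)) = 1 := by
    have h := S21_age j
    rw [hk 0, hk 1, hk 2, hk 3, ← Finset.sum_add_distrib, ← Finset.sum_add_distrib,
      ← Finset.sum_add_distrib] at h
    calc (∑ i, (c i : ℚ))
        = ∑ i, (c i : ℚ) * (S21 i 0 + S21 i 1 + S21 i 2 + S21 i 3) := by
          refine Finset.sum_congr rfl fun i _ => ?_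
          rw [S21_age i, mul_one]
      _ = 1 := by rw [← h]; refine Finset.sum_congr rfl fun i _ => by ring
  have hnat : (∑ i, c i) = 1 := by
    have : ((∑ i, c i : ℕ) : ℚ) = 1 := by push_cast; exact hages
    exact_mod_cast this
  obtain ⟨i, hi, hothers⟩ : ∃ i, c i = 1 ∧ ∀ k, k ≠ i → c k = 0 := by
    have hex : ∃ i, c i ≠ 0 := by
      by_contra h
      push_neg at h
      simp [h] at hnat
    obtain ⟨i, hi⟩ := hex
    have hle : c i ≤ ∑ k, c k := Finset.single_le_sum (fun k _ => Nat.zero_le _) (Finset.mem_univ i)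
    have hci : c i = 1 := le_antisymm (hnat ▸ hle) (Nat.one_le_iff_ne_zero.mpr hi)
    refine ⟨i, hci, fun k hk => ?_⟩
    by_contra hck
    have hik : c i + c k ≤ ∑ m, c m := by
      have he := Finset.add_sum_erase Finset.univ c (Finset.mem_univ i)
      have hk' : k ∈ Finset.univ.erase i := Finset.mem_erase.mpr ⟨hk, Finset.mem_univ k⟩
      have h2 : c k ≤ ∑ m ∈ Finset.univ.erase i, c m :=
        Finset.single_le_sum (fun m _ => Nat.zero_le _) hk'
      omega
    omega
  have hji : j ≠ i := fun h => by simp [h, hi] at hcj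
  have heq : S21 j = S21 i := by
    rw [hsum, Finset.sum_eq_single i]
    · simp [hi]
    · intro k _ hk
      simp [hothers k hk]
    · intro h; exact absurd (Finset.mem_univ i) h
  exact hji (S21_inj heq)
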